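/- Let (g, ⟨·,·⟩, (D,θ)) be a weak extrinsic symmetric triple with metric radical R. Then R is an ideal of g; moreover R ⊆ g₋⁺ = g₋ ∩ Ker D, and the quotient g/R carries an induced nondegenerate invariant inner product, an induced isometric involution, and an induced antisymmetric derivation D̄ with D̄³ = −D̄, making g/R an extrinsic symmetric triple. -/

import Mathlib

/-- A *weak extrinsic symmetric triple*, given by a Lie bracket `br`, an invariant
symmetric bilinear form `B`, an isometric involutive automorphism `θ` and an
antisymmetric derivation `D` with `D³ = -D`, `Dθ = -θD`, such that
`[g₊⁻, g₊⁻] = g₊⁺` and `B` is nondegenerate on `g₊ ⊕ g₋⁻`. Here `g₊/g₋` are the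
`±1`-eigenspaces of `θ` and `g⁺ = Ker D`, `g⁻ = {x | D²x = -x}`. -/
def IsWeakEST {g : Type*} [AddCommGroup g] [Module ℝ g]
    (br : g → g → g) (B : g → g → ℝ) (θ D : g → g) : Prop :=
  -- `br` is a Lie bracket
  (∀ x y z : g, br (x + y) z = br x z + br y z) ∧
  (∀ (c : ℝ) (x y : g), br (c • x) y = c • br x y) ∧
  (∀ x : g, br x x = 0) ∧
  (∀ x y z : g, br (br x y) z + br (br y z) x + br (br z x) y = 0) ∧
  -- `B` is a symmetric invariant bilinear form
  (∀ x y z : g, B (x + y) z = B x z + B y z) ∧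
  (∀ (c : ℝ) (x y : g), B (c • x) y = c * B x y) ∧
  (∀ x y : g, B x y = B y x) ∧
  (∀ x y z : g, B (br x y) z + B y (br x z) = 0) ∧
  -- `θ` is an isometric involutive automorphism
  IsLinearMap ℝ θ ∧
  (∀ x : g, θ (θ x) = x) ∧
  (∀ x y : g, θ (br x y) = br (θ x) (θ y)) ∧
  (∀ x y : g, B (θ x) (θ y) = B x y) ∧
  -- `D` is an antisymmetric derivation with `D³ = -D` and `Dθ = -θD`
  IsLinearMap ℝ D ∧
  (∀ x y : g, D (br x y) = br (D x) y + br x (D y)) ∧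
  (∀ x y : g, B (D x) y + B x (D y) = 0) ∧
  (∀ x : g, D (D (D x)) = -D x) ∧
  (∀ x : g, D (θ x) = -θ (D x)) ∧
  -- `[g₊⁻, g₊⁻] = g₊⁺`
  ((Submodule.span ℝ {z : g | ∃ x y : g,
      θ x = x ∧ D (D x) = -x ∧ θ y = y ∧ D (D y) = -y ∧ z = br x y} : Set g)
    = {w : g | θ w = w ∧ D w = 0}) ∧
  -- `B` is nondegenerate on `g₊ ⊕ g₋⁻`
  (∀ x y : g, θ x = x → θ y = -y → D (D y) = -y →
    (∀ u v : g, θ u = u → θ v = -v → D (D v) = -v → B (x + y) (u + v) = 0) →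
    x + y = 0)

/-- For a weak extrinsic symmetric triple, the metric radical `R` is a
(central) ideal contained in `g₋⁺ = g₋ ∩ Ker D`, and the quotient `g/R` carries an
induced nondegenerate invariant inner product, isometric involution and antisymmetric
derivation making it an extrinsic symmetric triple. -/
theorem stmt7 {g : Type*} [LieRing g] [LieAlgebra ℝ g] (B : g → g → ℝ) (θ D : g → g)
    (h : IsWeakEST (fun x y : g => ⁅x, y⁆) B θ D)
    (R : LieIdeal ℝ g) (hR : ∀ x : g, x ∈ R ↔ ∀ y : g, B x y = 0) :
    -- the metric radical is an ideal:
    (∀ x z : g, (∀ y : g, B x y = 0) → ∀ y : g, B ⁅z, x⁆ y = 0) ∧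
    -- R ⊆ g₋⁺ :
    (∀ x : g, (∀ y : g, B x y = 0) → θ x = -x ∧ D x = 0) ∧
    -- induced structure on the quotient g/R is an extrinsic symmetric triple:
    ∃ (B' : (g ⧸ R) → (g ⧸ R) → ℝ) (θ' D' : (g ⧸ R) → (g ⧸ R)),
      (∀ x y : g, B' (LieSubmodule.Quotient.mk' R x) (LieSubmodule.Quotient.mk' R y) = B x y) ∧
      (∀ x : g, θ' (LieSubmodule.Quotient.mk' R x) = LieSubmodule.Quotient.mk' R (θ x)) ∧
      (∀ x : g, D' (LieSubmodule.Quotient.mk' R x) = LieSubmodule.Quotient.mk' R (D x)) ∧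
      IsWeakEST (fun u v : g ⧸ R => ⁅u, v⁆) B' θ' D' ∧
      (∀ u : g ⧸ R, (∀ v : g ⧸ R, B' u v = 0) → u = 0) := by
  obtain ⟨hba, hbs, hbx, hjac, hBa, hBs, hBsym, hBinv, hθlin, hθθ, hθbr, hθB,
    hDlin, hDder, hDB, hD3, hDθ, hspan, hnd⟩ := h
  -- basic bilinearity facts
  have hB0 : ∀ y : g, B 0 y = 0 := fun y => by
    have := hBs 0 0 y; simpa using this
  have hB0' : ∀ x : g, B x 0 = 0 := fun x => by rw [hBsym]; exact hB0 x
  have hBneg : ∀ x y : g, B (-x) y = -B x y := fun x y => by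
    have := hBs (-1) x y; simpa using this
  have hBsub : ∀ x y z : g, B (x - y) z = B x z - B y z := fun x y z => by
    rw [sub_eq_add_neg, hBa, hBneg, sub_eq_add_neg]
  have hBa' : ∀ x y z : g, B x (y + z) = B x y + B x z := fun x y z => by
    rw [hBsym, hBa, hBsym y, hBsym z]
  -- θ, D as linear maps
  have hθD : ∀ x : g, θ (D x) = -D (θ x) := fun x => by
    rw [hDθ x, neg_neg]
  -- membership in the radical
  have hRθ : ∀ x : g, (∀ y : g, B x y = 0) → ∀ y : g, B (θ x) y = 0 := by
    intro x hx y
    calc B (θ x) y = B (θ x) (θ (θ y)) := by rw [hθθ]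
    _ = B x (θ y) := hθB x (θ y)
    _ = 0 := hx (θ y)
  have hRD : ∀ x : g, (∀ y : g, B x y = 0) → ∀ y : g, B (D x) y = 0 := by
    intro x hx y
    have := hDB x y
    have h2 := hx (D y)
    linarith
  -- nondegeneracy on g₊ alone and on g₋⁻ alone
  have hA : ∀ x : g, θ x = x → (∀ y : g, B x y = 0) → x = 0 := by
    intro x hx1 hx2
    have h0 : θ (0 : g) = -(0 : g) := by rw [hθlin.map_zero, neg_zero]
    have hD0 : D (D (0 : g)) = -(0 : g) := by
      rw [hDlin.map_zero, hDlin.map_zero, neg_zero]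
    have := hnd x 0 hx1 h0 hD0 (fun u v _ _ _ => by rw [add_zero]; exact hx2 (u + v))
    rwa [add_zero] at this
  -- the first two bullets
  have ideal : ∀ x z : g, (∀ y : g, B x y = 0) → ∀ y : g, B ⁅z, x⁆ y = 0 := by
    intro x z hx y
    have h1 := hBinv z x y
    have h2 := hx ⁅z, y⁆
    linarith
  have claim2 : ∀ x : g, (∀ y : g, B x y = 0) → θ x = -x ∧ D x = 0 := by
    intro x hx
    have hθx : θ x = -x := by
      have h1 : ∀ y : g, B (x + θ x) y = 0 := fun y => by
        rw [hBa]; rw [hx y, hRθ x hx y]; ring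
      have h2 : θ (x + θ x) = x + θ x := by
        rw [hθlin.map_add, hθθ]; exact add_comm _ _
      exact eq_neg_of_add_eq_zero_right (hA _ h2 h1)
    have hDx : D x = 0 := by
      apply hA (D x)
      · rw [hθD, hθx, hDlin.map_neg, neg_neg]
      · exact hRD x hx
    exact ⟨hθx, hDx⟩
  refine ⟨ideal, claim2, ?_⟩
  -- the quotient
  set f := (LieSubmodule.Quotient.mk' R) with hfdef
  have hsurj : Function.Surjective f := LieSubmodule.Quotient.surjective_mk' R
  have hker : ∀ x : g, f x = 0 ↔ ∀ y : g, B x y = 0 := fun x =>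
    (LieSubmodule.Quotient.mk_eq_zero R).trans (hR x)
  have hfeq : ∀ x y : g, f x = f y ↔ ∀ z : g, B (x - y) z = 0 := by
    intro x y
    rw [← sub_eq_zero, ← map_sub f, hker]
  have hfbr : ∀ x y : g, f ⁅x, y⁆ = ⁅f x, f y⁆ := fun x y => rfl
  set σ := Function.surjInv hsurj with hσdef
  have hσ : ∀ u : g ⧸ R, f (σ u) = u := fun u => Function.surjInv_eq hsurj u
  set B' : (g ⧸ R) → (g ⧸ R) → ℝ := fun u v => B (σ u) (σ v) with hB'def
  set θ' : (g ⧸ R) → (g ⧸ R) := fun u => f (θ (σ u)) with hθ'def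
  set D' : (g ⧸ R) → (g ⧸ R) := fun u => f (D (σ u)) with hD'def
  -- congruence for B
  have hBcong : ∀ x y u v : g, f x = f u → f y = f v → B x y = B u v := by
    intro x y u v h1 h2
    have e1 : B x y - B u y = B (x - u) y := (hBsub x u y).symm
    have e2 : B u y - B u v = B (y - v) u := by
      rw [hBsym u y, hBsym u v]; exact (hBsub y v u).symm
    have z1 := (hfeq x u).mp h1 y
    have z2 := (hfeq y v).mp h2 u
    have : B x y - B u v = B (x - u) y + B (y - v) u := by rw [← e1, ← e2]; ring
    rw [z1, z2] at this
    linarith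
  have hB'mk : ∀ x y : g, B' (f x) (f y) = B x y := by
    intro x y
    exact hBcong (σ (f x)) (σ (f y)) x y (by rw [hσ]) (by rw [hσ])
  have hθ'mk : ∀ x : g, θ' (f x) = f (θ x) := by
    intro x
    show f (θ (σ (f x))) = f (θ x)
    rw [hfeq]
    intro z
    have hmem : ∀ y : g, B (σ (f x) - x) y = 0 := (hfeq _ _).mp (by rw [hσ])
    have : θ (σ (f x)) - θ x = θ (σ (f x) - x) := (hθlin.map_sub _ _).symm
    rw [this]
    exact hRθ _ hmem z
  have hD'mk : ∀ x : g, D' (f x) = f (D x) := by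
    intro x
    show f (D (σ (f x))) = f (D x)
    rw [hfeq]
    intro z
    have hmem : ∀ y : g, B (σ (f x) - x) y = 0 := (hfeq _ _).mp (by rw [hσ])
    have : D (σ (f x)) - D x = D (σ (f x) - x) := (hDlin.map_sub _ _).symm
    rw [this]
    exact hRD _ hmem z
  refine ⟨B', θ', D', hB'mk, hθ'mk, hD'mk, ?_, ?_⟩
  · -- IsWeakEST on the quotient
    -- helper: exact representatives
    have L1 : ∀ u : g ⧸ R, θ' u = u → ∃ a : g, f a = u ∧ θ a = a := by
      intro u hu
      obtain ⟨c, rfl⟩ := hsurj u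
      rw [hθ'mk] at hu
      have hmem : ∀ y : g, B (θ c - c) y = 0 := (hfeq _ _).mp hu
      refine ⟨(1/2 : ℝ) • (c + θ c), ?_, ?_⟩
      · rw [hfeq]
        have e : (1/2:ℝ) • (c + θ c) - c = (1/2:ℝ) • (θ c - c) := by module
        rw [e]
        intro z
        rw [hBs, hmem z]; ring
      · rw [hθlin.map_smul, hθlin.map_add, hθθ, add_comm (θ c) c]
    have L2 : ∀ u : g ⧸ R, θ' u = u → D' (D' u) = -u →
        ∃ a : g, f a = u ∧ θ a = a ∧ D (D a) = -a := by
      intro u h1 h2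
      obtain ⟨a₁, hfa, hθa⟩ := L1 u h1
      rw [← hfa, hD'mk a₁, hD'mk (D a₁), ← map_neg f] at h2
      have hmem : ∀ y : g, B (D (D a₁) - -a₁) y = 0 := (hfeq _ _).mp h2
      refine ⟨-(D (D a₁)), ?_, ?_, ?_⟩
      · rw [← hfa, hfeq]
        intro z
        have e : -(D (D a₁)) - a₁ = -(D (D a₁) - -a₁) := by abel
        rw [e, hBneg, hmem z, neg_zero]
      · have key : θ (D (D a₁)) = D (D a₁) := by
          rw [hθD, hθD, hθa, hDlin.map_neg, neg_neg]
        rw [hθlin.map_neg, key]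
      · have e : D (D (-(D (D a₁)))) = -(D (D (D (D a₁)))) := by
          rw [hDlin.map_neg, hDlin.map_neg]
        rw [e, hD3]
    have L3 : ∀ u : g ⧸ R, θ' u = u → D' u = 0 →
        ∃ c : g, f c = u ∧ θ c = c ∧ D c = 0 := by
      intro u h1 h2
      obtain ⟨a, hfa, hθa⟩ := L1 u h1
      have h2' : f (D a) = 0 := by rw [← hD'mk, hfa, h2]
      have hmem : ∀ y : g, B (D a) y = 0 := (hker _).mp h2'
      have hDDa : D (D a) = 0 := (claim2 _ hmem).2
      have hDa : D a = 0 := by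
        have h3 := hD3 a
        rw [hDDa, hDlin.map_zero] at h3
        exact neg_eq_zero.mp h3.symm
      exact ⟨a, hfa, hθa, hDa⟩
    have L4 : ∀ u : g ⧸ R, θ' u = -u → ∃ b : g, f b = u ∧ θ b = -b := by
      intro u hu
      obtain ⟨c, rfl⟩ := hsurj u
      rw [hθ'mk, ← map_neg f] at hu
      have hmem : ∀ y : g, B (θ c - -c) y = 0 := (hfeq _ _).mp hu
      refine ⟨(1/2 : ℝ) • (c - θ c), ?_, ?_⟩
      · rw [hfeq]
        have e : (1/2:ℝ) • (c - θ c) - c = -((1/2:ℝ) • (θ c - -c)) := by module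
        rw [e]
        intro z
        rw [hBneg, hBs, hmem z]; ring
      · rw [hθlin.map_smul, hθlin.map_sub, hθθ]; module
    have L5 : ∀ u : g ⧸ R, θ' u = -u → D' (D' u) = -u →
        ∃ b : g, f b = u ∧ θ b = -b ∧ D (D b) = -b := by
      intro u h1 h2
      obtain ⟨b₁, hfb, hθb⟩ := L4 u h1
      rw [← hfb, hD'mk b₁, hD'mk (D b₁), ← map_neg f] at h2
      have hmem : ∀ y : g, B (D (D b₁) - -b₁) y = 0 := (hfeq _ _).mp h2
      refine ⟨-(D (D b₁)), ?_, ?_, ?_⟩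
      · rw [← hfb, hfeq]
        intro z
        have e : -(D (D b₁)) - b₁ = -(D (D b₁) - -b₁) := by abel
        rw [e, hBneg, hmem z, neg_zero]
      · have key : θ (D (D b₁)) = -(D (D b₁)) := by
          rw [hθD, hθD, hθb]
          simp only [hDlin.map_neg, neg_neg]
        rw [hθlin.map_neg, key, neg_neg]
      · have e : D (D (-(D (D b₁)))) = -(D (D (D (D b₁)))) := by
          rw [hDlin.map_neg, hDlin.map_neg]
        rw [e, hD3]
    -- orthogonality facts
    have orthoθ : ∀ a w : g, θ a = a → θ w = -w → B a w = 0 := by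
      intro a w h1 h2
      have h3 := hθB a w
      rw [h1, h2] at h3
      have h4 : B a (-w) = -B a w := by rw [hBsym, hBneg, hBsym]
      rw [h4] at h3; linarith
    have orthoD : ∀ b w : g, D (D b) = -b → D w = 0 → B b w = 0 := by
      intro b w h1 h2
      have e1 := hDB (D b) w
      rw [h1, h2, hBneg] at e1
      have e2 := hB0' (D b)
      linarith
    -- decomposition of an arbitrary element
    have decomp : ∀ z : g, ∃ z1 z2 z3 : g, z = (z1 + z2) + z3 ∧ θ z1 = z1 ∧
        θ z2 = -z2 ∧ D (D z2) = -z2 ∧ θ z3 = -z3 ∧ D z3 = 0 := by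
      intro z
      set p := (1/2:ℝ) • (z + θ z) with hp
      set m := (1/2:ℝ) • (z - θ z) with hm
      have hθp : θ p = p := by
        rw [hp, hθlin.map_smul, hθlin.map_add, hθθ, add_comm (θ z) z]
      have hθm : θ m = -m := by
        rw [hm, hθlin.map_smul, hθlin.map_sub, hθθ]; module
      have hθDDm : θ (D (D m)) = -(D (D m)) := by
        rw [hθD, hθD, hθm]
        simp only [hDlin.map_neg, neg_neg]
      refine ⟨p, -(D (D m)), m + D (D m), ?_, hθp, ?_, ?_, ?_, ?_⟩
      · have hpm : p + m = z := by rw [hp, hm]; module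
        calc z = p + m := hpm.symm
        _ = (p + -(D (D m))) + (m + D (D m)) := by abel
      · rw [hθlin.map_neg, hθDDm, neg_neg]
      · have e : D (D (-(D (D m)))) = -(D (D (D (D m)))) := by
          rw [hDlin.map_neg, hDlin.map_neg]
        rw [e, hD3]
      · rw [hθlin.map_add, hθm, hθDDm]; abel
      · rw [hDlin.map_add, hD3, add_neg_cancel]
    -- linearity of θ' and D'
    have hθ'add : ∀ u v : g ⧸ R, θ' (u + v) = θ' u + θ' v := by
      intro u v
      obtain ⟨x, rfl⟩ := hsurj u
      obtain ⟨y, rfl⟩ := hsurj v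
      rw [← map_add f, hθ'mk (x + y), hθ'mk x, hθ'mk y, hθlin.map_add, map_add f]
    have hθ'smul : ∀ (c : ℝ) (u : g ⧸ R), θ' (c • u) = c • θ' u := by
      intro c u
      obtain ⟨x, rfl⟩ := hsurj u
      rw [← map_smul f, hθ'mk (c • x), hθ'mk x, hθlin.map_smul, map_smul f]
    have hD'add : ∀ u v : g ⧸ R, D' (u + v) = D' u + D' v := by
      intro u v
      obtain ⟨x, rfl⟩ := hsurj u
      obtain ⟨y, rfl⟩ := hsurj v
      rw [← map_add f, hD'mk (x + y), hD'mk x, hD'mk y, hDlin.map_add, map_add f]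
    have hD'smul : ∀ (c : ℝ) (u : g ⧸ R), D' (c • u) = c • D' u := by
      intro c u
      obtain ⟨x, rfl⟩ := hsurj u
      rw [← map_smul f, hD'mk (c • x), hD'mk x, hDlin.map_smul, map_smul f]
    refine ⟨fun u v w => add_lie u v w, fun c u v => smul_lie c u v, fun u => lie_self u,
      ?_, ?_, ?_, ?_, ?_, ⟨hθ'add, hθ'smul⟩, ?_, ?_, ?_, ⟨hD'add, hD'smul⟩, ?_, ?_, ?_, ?_, ?_, ?_⟩
    · -- Jacobi
      intro u v w
      obtain ⟨x, rfl⟩ := hsurj u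
      obtain ⟨y, rfl⟩ := hsurj v
      obtain ⟨z, rfl⟩ := hsurj w
      show ⁅⁅f x, f y⁆, f z⁆ + ⁅⁅f y, f z⁆, f x⁆ + ⁅⁅f z, f x⁆, f y⁆ = 0
      have e : (⁅⁅x, y⁆, z⁆ + ⁅⁅y, z⁆, x⁆ + ⁅⁅z, x⁆, y⁆ : g) = 0 := hjac x y z
      have e2 := congrArg f e
      simp only [map_add f, map_zero f, hfbr] at e2
      exact e2
    · -- B' additive
      intro u v w
      obtain ⟨x, rfl⟩ := hsurj u
      obtain ⟨y, rfl⟩ := hsurj v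
      obtain ⟨z, rfl⟩ := hsurj w
      rw [← map_add f, hB'mk, hB'mk, hB'mk]
      exact hBa x y z
    · -- B' smul
      intro c u v
      obtain ⟨x, rfl⟩ := hsurj u
      obtain ⟨y, rfl⟩ := hsurj v
      rw [← map_smul f, hB'mk, hB'mk]
      exact hBs c x y
    · -- B' symmetric
      intro u v
      obtain ⟨x, rfl⟩ := hsurj u
      obtain ⟨y, rfl⟩ := hsurj v
      rw [hB'mk, hB'mk]
      exact hBsym x y
    · -- B' invariant
      intro u v w
      obtain ⟨x, rfl⟩ := hsurj u
      obtain ⟨y, rfl⟩ := hsurj v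
      obtain ⟨z, rfl⟩ := hsurj w
      show B' ⁅f x, f y⁆ (f z) + B' (f y) ⁅f x, f z⁆ = 0
      rw [← hfbr, ← hfbr, hB'mk, hB'mk]
      exact hBinv x y z
    · -- θ' involutive
      intro u
      obtain ⟨x, rfl⟩ := hsurj u
      rw [hθ'mk x, hθ'mk (θ x), hθθ]
    · -- θ' automorphism
      intro u v
      obtain ⟨x, rfl⟩ := hsurj u
      obtain ⟨y, rfl⟩ := hsurj v
      show θ' ⁅f x, f y⁆ = ⁅θ' (f x), θ' (f y)⁆
      rw [← hfbr, hθ'mk ⁅x, y⁆, hθ'mk x, hθ'mk y,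
        show (θ ⁅x, y⁆ : g) = ⁅θ x, θ y⁆ from hθbr x y]
      exact hfbr _ _
    · -- θ' isometry
      intro u v
      obtain ⟨x, rfl⟩ := hsurj u
      obtain ⟨y, rfl⟩ := hsurj v
      rw [hθ'mk, hθ'mk, hB'mk, hB'mk]
      exact hθB x y
    · -- D' derivation
      intro u v
      obtain ⟨x, rfl⟩ := hsurj u
      obtain ⟨y, rfl⟩ := hsurj v
      show D' ⁅f x, f y⁆ = ⁅D' (f x), f y⁆ + ⁅f x, D' (f y)⁆
      rw [← hfbr, hD'mk ⁅x, y⁆, hD'mk x, hD'mk y,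
        show (D ⁅x, y⁆ : g) = ⁅D x, y⁆ + ⁅x, D y⁆ from hDder x y, map_add f, hfbr, hfbr]
    · -- D' antisymmetric
      intro u v
      obtain ⟨x, rfl⟩ := hsurj u
      obtain ⟨y, rfl⟩ := hsurj v
      rw [hD'mk, hD'mk, hB'mk, hB'mk]
      exact hDB x y
    · -- D'³ = -D'
      intro u
      obtain ⟨x, rfl⟩ := hsurj u
      rw [hD'mk x, hD'mk (D x), hD'mk (D (D x)), hD3, map_neg f]
    · -- D'θ' = -θ'D'
      intro u
      obtain ⟨x, rfl⟩ := hsurj u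
      have lhs : D' (θ' (f x)) = f (D (θ x)) := by rw [hθ'mk x, hD'mk (θ x)]
      have rhs : θ' (D' (f x)) = f (θ (D x)) := by rw [hD'mk x, hθ'mk (D x)]
      rw [lhs, rhs, show (D (θ x) : g) = -θ (D x) from hDθ x, map_neg f]
    · -- span condition
      apply Set.Subset.antisymm
      · -- span ⊆ g₊⁺
        have hK : ∃ K : Submodule ℝ (g ⧸ R), (K : Set (g ⧸ R)) = {w | θ' w = w ∧ D' w = 0} := by
          refine ⟨⟨⟨⟨{w | θ' w = w ∧ D' w = 0}, ?_⟩, ?_⟩, ?_⟩, rfl⟩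
          · rintro u v ⟨hu1, hu2⟩ ⟨hv1, hv2⟩
            exact ⟨by rw [hθ'add, hu1, hv1], by rw [hD'add, hu2, hv2, add_zero]⟩
          · constructor
            · have := hθ'smul 0 0
              simpa using this
            · have := hD'smul 0 0
              simpa using this
          · rintro c u ⟨hu1, hu2⟩
            exact ⟨by rw [hθ'smul, hu1], by rw [hD'smul, hu2, smul_zero]⟩
        obtain ⟨K, hKset⟩ := hK
        have hle : Submodule.span ℝ {z : g ⧸ R | ∃ x y : g ⧸ R,
            θ' x = x ∧ D' (D' x) = -x ∧ θ' y = y ∧ D' (D' y) = -y ∧ z = ⁅x, y⁆} ≤ K := by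
          apply Submodule.span_le.mpr
          rintro z ⟨xq, yq, hx1, hx2, hy1, hy2, rfl⟩
          obtain ⟨a, hfa, hθa, hDa⟩ := L2 xq hx1 hx2
          obtain ⟨b, hfb, hθb2, hDb2⟩ := L2 yq hy1 hy2
          have hbr : (⁅a, b⁆ : g) ∈ {w : g | θ w = w ∧ D w = 0} := by
            rw [← hspan]
            exact Submodule.subset_span ⟨a, b, hθa, hDa, hθb2, hDb2, rfl⟩
          obtain ⟨hbθ, hbD⟩ := hbr
          have : (⁅xq, yq⁆ : g ⧸ R) ∈ (K : Set (g ⧸ R)) := by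
            rw [hKset]
            constructor
            · show θ' ⁅xq, yq⁆ = ⁅xq, yq⁆
              rw [← hfa, ← hfb, ← hfbr, hθ'mk ⁅a, b⁆, hbθ]
            · show D' ⁅xq, yq⁆ = 0
              rw [← hfa, ← hfb, ← hfbr, hD'mk ⁅a, b⁆, hbD, map_zero f]
          exact this
        intro w hw
        have hw' : w ∈ K := hle hw
        have : w ∈ (K : Set (g ⧸ R)) := hw'
        rw [hKset] at this
        exact this
      · -- g₊⁺ ⊆ span
        rintro w ⟨hw1, hw2⟩
        obtain ⟨c, hfc, hθc, hDc⟩ := L3 w hw1 hw2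
        have hc : c ∈ Submodule.span ℝ {z : g | ∃ x y : g,
            θ x = x ∧ D (D x) = -x ∧ θ y = y ∧ D (D y) = -y ∧ z = ⁅x, y⁆} := by
          have h1 : c ∈ {w : g | θ w = w ∧ D w = 0} := ⟨hθc, hDc⟩
          rw [← hspan] at h1
          exact h1
        have hle2 : Submodule.span ℝ {z : g | ∃ x y : g,
            θ x = x ∧ D (D x) = -x ∧ θ y = y ∧ D (D y) = -y ∧ z = ⁅x, y⁆} ≤
            Submodule.comap (f : g →ₗ[ℝ] g ⧸ R) (Submodule.span ℝ {z : g ⧸ R | ∃ x y : g ⧸ R,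
            θ' x = x ∧ D' (D' x) = -x ∧ θ' y = y ∧ D' (D' y) = -y ∧ z = ⁅x, y⁆}) := by
          apply Submodule.span_le.mpr
          rintro z ⟨x, y, hx1, hx2, hy1, hy2, rfl⟩
          rw [SetLike.mem_coe, Submodule.mem_comap]
          apply Submodule.subset_span
          refine ⟨f x, f y, by rw [hθ'mk, hx1], ?_, by rw [hθ'mk, hy1], ?_, ?_⟩
          · rw [hD'mk x, hD'mk (D x), hx2, map_neg f]
          · rw [hD'mk y, hD'mk (D y), hy2, map_neg f]
          · exact (hfbr x y).symm ▸ rfl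
        have := hle2 hc
        rw [Submodule.mem_comap] at this
        have h2 : f c ∈ Submodule.span ℝ {z : g ⧸ R | ∃ x y : g ⧸ R,
            θ' x = x ∧ D' (D' x) = -x ∧ θ' y = y ∧ D' (D' y) = -y ∧ z = ⁅x, y⁆} := this
        rw [hfc] at h2
        exact h2
    · -- nondegeneracy on g₊ ⊕ g₋⁻
      intro xb yb hx hy1 hy2 H
      obtain ⟨a, hfa, hθa⟩ := L1 xb hx
      obtain ⟨b, hfb, hθb, hDb⟩ := L5 yb hy1 hy2
      have key : ∀ z : g, B (a + b) z = 0 := by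
        intro z
        obtain ⟨z1, z2, z3, hz, h1, h2, h3, h4, h5⟩ := decomp z
        have t3 : B (a + b) z3 = 0 := by
          rw [hBa, orthoθ a z3 hθa h4, orthoD b z3 hDb h5, add_zero]
        have t12 : B (a + b) (z1 + z2) = 0 := by
          have hH := H (f z1) (f z2) (by rw [hθ'mk, h1]) (by rw [hθ'mk, h2, map_neg f])
            (by rw [hD'mk z2, hD'mk (D z2), h3, map_neg f])
          rw [← hfa, ← hfb, ← map_add f, ← map_add f, hB'mk] at hH
          exact hH
        calc B (a + b) z = B (a + b) ((z1 + z2) + z3) := by rw [← hz]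
        _ = B (a + b) (z1 + z2) + B (a + b) z3 := hBa' _ _ _
        _ = 0 := by rw [t12, t3]; ring
      have hz : f (a + b) = 0 := (hker _).mpr key
      rw [map_add f, hfa, hfb] at hz
      exact hz
  · -- final nondegeneracy
    intro u hu
    obtain ⟨x, rfl⟩ := hsurj u
    rw [hker]
    intro y
    have := hu (f y)
    rwa [hB'mk] at this
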